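/- For every finite undirected simple graph G on k vertices, and any choice of residues where exactly one vertex is assigned 3 mod 4 and the rest 1 mod 4, there exist infinitely many square-free positive integers n = p_1···p_k with primes in the prescribed congruence classes mod 4 such that G(n) is isomorphic to G (via the labeling p_i ↦ v_i). -/

import Mathlib

open Finset

/-- A residue with prescribed Jacobi symbol modulo an odd prime. -/
lemma exists_residue_jacobi (ℓ : ℕ) (hℓ : ℓ.Prime) (hodd : ℓ ≠ 2) (ε : ℤ)
    (hε : ε = 1 ∨ ε = -1) : ∃ b : ℕ, ¬ ℓ ∣ b ∧ jacobiSym (b : ℤ) ℓ = ε := by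
  haveI : Fact ℓ.Prime := ⟨hℓ⟩
  rcases hε with h | h
  · refine ⟨1, by simpa using hℓ.ne_one, by simp [h]⟩
  · obtain ⟨a, ha⟩ := FiniteField.exists_nonsquare (F := ZMod ℓ)
      (by rw [ZMod.ringChar_zmod_n]; exact_mod_cast hodd)
    have ha0 : a ≠ 0 := fun h0 => ha (h0 ▸ ⟨0, by simp⟩)
    refine ⟨a.val, ?_, ?_⟩
    · intro hdvd
      have : ((a.val : ℕ) : ZMod ℓ) = 0 := (ZMod.natCast_eq_zero_iff _ _).mpr hdvd
      rw [ZMod.natCast_val, ZMod.cast_id] at this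
      exact ha0 this
    · rw [← jacobiSym.legendreSym.to_jacobiSym, h, legendreSym.eq_neg_one_iff]
      have : ((a.val : ℤ) : ZMod ℓ) = a := by
        push_cast
        rw [ZMod.natCast_val, ZMod.cast_id]
      rwa [this]

/-- Key step: find a prime `q > N` with `q % 4 = r` and prescribed Jacobi symbols
`J(q | ℓ) = ε ℓ` for each odd prime `ℓ` in a finite set `s`. -/
lemma exists_prime_step (s : Finset ℕ) (hs : ∀ ℓ ∈ s, ℓ.Prime ∧ ℓ ≠ 2) (ε : ℕ → ℤ)
    (hε : ∀ ℓ ∈ s, ε ℓ = 1 ∨ ε ℓ = -1) (r : ℕ) (hr : r = 1 ∨ r = 3) (N : ℕ) :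
    ∃ q : ℕ, q.Prime ∧ N < q ∧ q % 4 = r ∧ ∀ ℓ ∈ s, jacobiSym (q : ℤ) ℓ = ε ℓ := by
  classical
  choose b hb using fun (ℓ : ℕ) (h : ℓ ∈ s) =>
    exists_residue_jacobi ℓ (hs ℓ h).1 (hs ℓ h).2 (ε ℓ) (hε ℓ h)
  set a : ℕ → ℕ := fun m => if m = 4 then r else if h : m ∈ s then b m h else 0 with ha_def
  have h4 : (4 : ℕ) ∉ s := fun h => by have := (hs 4 h).1; norm_num at this
  have hnz : ∀ i ∈ insert 4 s, (id i : ℕ) ≠ 0 := by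
    intro i hi
    rcases Finset.mem_insert.mp hi with h | h
    · simp [h]
    · exact (hs i h).1.pos.ne'
  have hpp : Set.Pairwise ((insert 4 s : Finset ℕ) : Set ℕ) (Function.onFun Nat.Coprime id) := by
    intro i hi j hj hij
    simp only [Finset.coe_insert, Set.mem_insert_iff, Finset.mem_coe] at hi hj
    have key : ∀ p ∈ s, Nat.Coprime 4 p := by
      intro p hp
      have h2 : Nat.Coprime 2 p := (Nat.coprime_primes Nat.prime_two (hs p hp).1).mpr
        (fun h => (hs p hp).2 h.symm)
      have := Nat.Coprime.pow_left 2 h2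
      norm_num at this
      exact this
    rcases hi with rfl | hi
    · rcases hj with rfl | hj
      · exact absurd rfl hij
      · exact key j hj
    · rcases hj with rfl | hj
      · exact (key i hi).symm
      · exact (Nat.coprime_primes (hs i hi).1 (hs j hj).1).mpr hij
  obtain ⟨x, hx⟩ := Nat.chineseRemainderOfFinset a id (insert 4 s) hnz hpp
  set M : ℕ := ∏ i ∈ insert 4 s, i with hM_def
  have hMpos : 0 < M := Finset.prod_pos (fun i hi => Nat.pos_of_ne_zero (hnz i hi))
  haveI : NeZero M := ⟨hMpos.ne'⟩
  have hx4 : x ≡ r [MOD 4] := by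
    have := hx 4 (Finset.mem_insert_self _ _)
    simpa [ha_def] using this
  have hxb : ∀ ℓ (h : ℓ ∈ s), x ≡ b ℓ h [MOD ℓ] := by
    intro ℓ h
    have := hx ℓ (Finset.mem_insert_of_mem h)
    have hℓ4 : ℓ ≠ 4 := fun e => h4 (e ▸ h)
    simpa [ha_def, hℓ4, h] using this
  have hcop : Nat.Coprime x M := by
    apply Nat.Coprime.prod_right
    intro i hi
    rcases Finset.mem_insert.mp hi with rfl | hi
    · have hxodd : ¬ (2 ∣ x) := by
        intro hd
        have hmod : x % 2 = r % 2 := Nat.ModEq.of_dvd (by norm_num) hx4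
        obtain ⟨c, rfl⟩ := hd
        rcases hr with rfl | rfl <;> omega
      have h2 : Nat.Coprime x 2 := ((Nat.Prime.coprime_iff_not_dvd Nat.prime_two).mpr hxodd).symm
      have h4c := Nat.Coprime.pow_right 2 h2
      norm_num at h4c
      exact h4c
    · have hnd : ¬ (i ∣ x) := by
        intro hdvd
        exact (hb i hi).1 ((Nat.modEq_zero_iff_dvd).mp
          ((hxb i hi).symm.trans ((Nat.modEq_zero_iff_dvd).mpr hdvd)))
      exact ((Nat.Prime.coprime_iff_not_dvd (hs i hi).1).mpr hnd).symm
  have hunit : IsUnit ((x : ZMod M)) := (ZMod.isUnit_iff_coprime x M).mpr hcop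
  obtain ⟨q, hqN, hq_prime, hq_eq⟩ := Nat.forall_exists_prime_gt_and_eq_mod hunit N
  have hqx : q ≡ x [MOD M] := (ZMod.natCast_eq_natCast_iff _ _ _).mp (by rw [hq_eq])
  refine ⟨q, hq_prime, hqN, ?_, ?_⟩
  · have h4M : (4 : ℕ) ∣ M := Finset.dvd_prod_of_mem id (Finset.mem_insert_self _ _)
    have hq4 : q ≡ r [MOD 4] := (hqx.of_dvd h4M).trans hx4
    have hrlt : r < 4 := by rcases hr with rfl | rfl <;> norm_num
    calc q % 4 = r % 4 := hq4
    _ = r := Nat.mod_eq_of_lt hrlt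
  · intro ℓ hℓ
    have hℓM : ℓ ∣ M := Finset.dvd_prod_of_mem id (Finset.mem_insert_of_mem hℓ)
    have h1 : q ≡ b ℓ hℓ [MOD ℓ] := (hqx.of_dvd hℓM).trans (hxb ℓ hℓ)
    have h2 : (q : ℤ) % (ℓ : ℤ) = ((b ℓ hℓ : ℕ) : ℤ) % (ℓ : ℤ) := by exact_mod_cast h1
    calc jacobiSym (q : ℤ) ℓ = jacobiSym ((b ℓ hℓ : ℕ) : ℤ) ℓ := jacobiSym.mod_left' h2
    _ = ε ℓ := (hb ℓ hℓ).2

/-- Inductive construction of the primes realizing the prescribed symbols. -/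
lemma build_primes (k : ℕ) (r : Fin k → ℕ) (hr : ∀ i, r i = 1 ∨ r i = 3)
    (t : Fin k → Fin k → Prop) (N : ℕ) :
    ∀ m, m ≤ k → ∃ p : Fin k → ℕ,
      (∀ i : Fin k, (i : ℕ) < m → (p i).Prime ∧ N < p i ∧ p i % 4 = r i) ∧
      (∀ i j : Fin k, (i : ℕ) < (j : ℕ) → (j : ℕ) < m → p i < p j) ∧
      (∀ i j : Fin k, (i : ℕ) < (j : ℕ) → (j : ℕ) < m →
        (jacobiSym (p j : ℤ) (p i) = -1 ↔ t i j)) := by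
  classical
  intro m
  induction m with
  | zero =>
    intro _
    exact ⟨fun _ => 0, fun i h => absurd h (by omega), fun i j _ h => absurd h (by omega),
      fun i j _ h => absurd h (by omega)⟩
  | succ m ih =>
    intro hm1
    obtain ⟨p, h1, h2, h3⟩ := ih (by omega)
    have hmk : m < k := by omega
    set im : Fin k := ⟨m, hmk⟩ with him
    -- injectivity on the already constructed part
    have hinj : ∀ i i' : Fin k, (i : ℕ) < m → (i' : ℕ) < m → p i = p i' → i = i' := by
      intro i i' hi hi' he
      rcases lt_trichotomy (i : ℕ) (i' : ℕ) with h | h | h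
      · exact absurd he (h2 i i' h hi').ne
      · exact Fin.ext h
      · exact absurd he.symm (h2 i' i h hi).ne
    set s : Finset ℕ := (Finset.univ.filter (fun i : Fin k => (i : ℕ) < m)).image p with hs_def
    have hmem : ∀ ℓ, ℓ ∈ s ↔ ∃ i : Fin k, (i : ℕ) < m ∧ p i = ℓ := by
      intro ℓ
      simp [hs_def]
    have hsprime : ∀ ℓ ∈ s, ℓ.Prime ∧ ℓ ≠ 2 := by
      intro ℓ hℓ
      obtain ⟨i, hi, rfl⟩ := (hmem ℓ).mp hℓ
      refine ⟨(h1 i hi).1, ?_⟩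
      intro h2'
      have := (h1 i hi).2.2
      rcases hr i with h | h <;> rw [h2'] at this <;> omega
    set ε : ℕ → ℤ := fun ℓ =>
      if ∃ i : Fin k, (i : ℕ) < m ∧ p i = ℓ ∧ t i im then -1 else 1 with hε_def
    have hε : ∀ ℓ ∈ s, ε ℓ = 1 ∨ ε ℓ = -1 := by
      intro ℓ _
      by_cases h : ∃ i : Fin k, (i : ℕ) < m ∧ p i = ℓ ∧ t i im
      · right; simp [hε_def, h]
      · left; simp [hε_def, h]
    obtain ⟨q, hq_prime, hq_gt, hq_mod, hq_jac⟩ :=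
      exists_prime_step s hsprime ε hε (r im) (hr im) (max N (s.sup id))
    refine ⟨Function.update p im q, ?_, ?_, ?_⟩
    · intro i hi
      by_cases hlt : (i : ℕ) < m
      · have hne : i ≠ im := by
          intro e; rw [e] at hlt; simp [him] at hlt
        rw [Function.update_of_ne hne]
        exact h1 i hlt
      · have : i = im := Fin.ext (by simp [him]; omega)
        rw [this, Function.update_self]
        exact ⟨hq_prime, lt_of_le_of_lt (le_max_left _ _) hq_gt, hq_mod⟩
    · intro i j hij hj
      have hi : (i : ℕ) < m := by omega
      have hne : i ≠ im := fun e => by rw [e] at hi; simp [him] at hi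
      rw [Function.update_of_ne hne]
      by_cases hjm : (j : ℕ) < m
      · have hnej : j ≠ im := fun e => by rw [e] at hjm; simp [him] at hjm
        rw [Function.update_of_ne hnej]
        exact h2 i j hij hjm
      · have hje : j = im := Fin.ext (by simp [him]; omega)
        rw [hje, Function.update_self]
        have hpis : p i ∈ s := (hmem (p i)).mpr ⟨i, hi, rfl⟩
        have : p i ≤ s.sup id := Finset.le_sup (f := id) hpis
        exact lt_of_le_of_lt (le_trans this (le_max_right N _)) hq_gt
    · intro i j hij hj
      have hi : (i : ℕ) < m := by omega
      have hne : i ≠ im := fun e => by rw [e] at hi; simp [him] at hi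
      rw [Function.update_of_ne hne]
      by_cases hjm : (j : ℕ) < m
      · have hnej : j ≠ im := fun e => by rw [e] at hjm; simp [him] at hjm
        rw [Function.update_of_ne hnej]
        exact h3 i j hij hjm
      · have hje : j = im := Fin.ext (by simp [him]; omega)
        subst hje
        rw [Function.update_self]
        have hpis : p i ∈ s := (hmem (p i)).mpr ⟨i, hi, rfl⟩
        rw [hq_jac (p i) hpis]
        by_cases h : ∃ i' : Fin k, (i' : ℕ) < m ∧ p i' = p i ∧ t i' im
        · obtain ⟨i', hi', he, ht⟩ := h
          have hii : i' = i := hinj i' i hi' hi he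
          simp only [hε_def, if_pos (⟨i', hi', he, ht⟩ :
            ∃ i' : Fin k, (i' : ℕ) < m ∧ p i' = p i ∧ t i' im)]
          exact iff_of_true (by norm_num) (hii ▸ ht)
        · have hnt : ¬ t i im := fun ht => h ⟨i, hi, rfl, ht⟩
          simp only [hε_def, if_neg h]
          exact iff_of_false (by norm_num) hnt

lemma squarefree_prod_primes (s : Finset ℕ) (h : ∀ p ∈ s, p.Prime) :
    Squarefree (∏ p ∈ s, p) := by
  classical
  induction s using Finset.induction_on with
  | empty => simpa using squarefree_one
  | @insert a s' ha ih =>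
    rw [Finset.prod_insert ha, Nat.squarefree_mul_iff]
    refine ⟨?_, (h a (Finset.mem_insert_self _ _)).squarefree,
      ih (fun p hp => h p (Finset.mem_insert_of_mem hp))⟩
    exact Nat.Coprime.prod_right fun p hp =>
      (Nat.coprime_primes (h a (Finset.mem_insert_self _ _))
        (h p (Finset.mem_insert_of_mem hp))).mpr (fun e => ha (e ▸ hp))

/-- For every undirected simple graph G on k vertices and any assignment
where one vertex i₀ is assigned the class 3 mod 4 and the rest 1 mod 4, there are
infinitely many square-free n = p₁⋯p_k with primes in the prescribed classes such that
G(n) (with edges where the Legendre symbol is -1) realizes G under p_i ↦ v_i. -/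
theorem infinitely_many_n_realizing_graph (k : ℕ) (hk : 1 ≤ k)
    (G : SimpleGraph (Fin k)) (i₀ : Fin k) :
    {n : ℕ | Squarefree n ∧ ∃ p : Fin k → ℕ, Function.Injective p ∧
      (∀ i, (p i).Prime) ∧ n = ∏ i, p i ∧ p i₀ % 4 = 3 ∧
      (∀ i, i ≠ i₀ → p i % 4 = 1) ∧
      ∀ i j : Fin k, i ≠ j →
        (G.Adj i j ↔ jacobiSym (p i : ℤ) (p j) = -1)}.Infinite := by
  classical
  apply Set.infinite_of_forall_exists_gt
  intro N
  obtain ⟨p, h1, h2, h3⟩ := build_primes k (fun i => if i = i₀ then 3 else 1)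
    (fun i => by by_cases h : i = i₀ <;> norm_num [h]) (fun i j => G.Adj i j) N k le_rfl
  have h1' : ∀ i : Fin k, (p i).Prime ∧ N < p i ∧ p i % 4 = (if i = i₀ then 3 else 1) :=
    fun i => h1 i i.isLt
  have hinj : Function.Injective p := by
    intro i j he
    rcases lt_trichotomy (i : ℕ) (j : ℕ) with h | h | h
    · exact absurd he (h2 i j h j.isLt).ne
    · exact Fin.ext h
    · exact absurd he.symm (h2 j i h i.isLt).ne
  have hodd : ∀ i : Fin k, Odd (p i) := by
    intro i
    have hm := (h1' i).2.2
    rw [Nat.odd_iff, ← Nat.mod_mod_of_dvd (p i) (by norm_num : (2:ℕ) ∣ 4)]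
    by_cases h : i = i₀
    · rw [if_pos h] at hm; omega
    · rw [if_neg h] at hm; omega
  have hsymm : ∀ i j : Fin k, i ≠ j →
      jacobiSym (p i : ℤ) (p j) = jacobiSym (p j : ℤ) (p i) := by
    intro i j hij
    by_cases h : i = i₀
    · have hj : j ≠ i₀ := fun e => hij (h.trans e.symm)
      have hmod : p j % 4 = 1 := by simpa [hj] using (h1' j).2.2
      exact (jacobiSym.quadratic_reciprocity_one_mod_four hmod (hodd i)).symm
    · have hmod : p i % 4 = 1 := by simpa [h] using (h1' i).2.2
      exact jacobiSym.quadratic_reciprocity_one_mod_four hmod (hodd j)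
  refine ⟨∏ i, p i, ⟨?_, p, hinj, fun i => (h1' i).1, rfl, by simpa using (h1' i₀).2.2,
      fun i hi => by simpa [hi] using (h1' i).2.2, ?_⟩, ?_⟩
  · have heq : ∏ ℓ ∈ Finset.univ.image p, ℓ = ∏ i, p i :=
      Finset.prod_image (fun i _ j _ h => hinj h)
    rw [← heq]
    apply squarefree_prod_primes
    intro ℓ hℓ
    obtain ⟨i, _, rfl⟩ := Finset.mem_image.mp hℓ
    exact (h1' i).1
  · intro i j hij
    rcases lt_trichotomy (i : ℕ) (j : ℕ) with h | h | h
    · rw [hsymm i j hij]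
      exact (h3 i j h j.isLt).symm
    · exact absurd (Fin.ext h) hij
    · rw [G.adj_comm]
      exact (h3 j i h i.isLt).symm
  · have hle : p i₀ ≤ ∏ i, p i :=
      Finset.single_le_prod' (fun i _ => (h1' i).1.one_lt.le) (Finset.mem_univ i₀)
    exact lt_of_lt_of_le (h1' i₀).2.1 hle
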